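/- Let R be a noetherian ring, R[t] the polynomial ring with t central, and S_t = { f ∈ R[t] : f(0) ∈ R^× }. Then S_t is a left denominator set (satisfies the left Ore condition) consisting of non-zero-divisors, so the localisation R[t]_{S_t} exists and is noetherian. -/

import Mathlib

open Polynomial

/-- The natural inclusion of polynomials into power series, as a ring hom,
for a (possibly noncommutative) semiring. -/
noncomputable def polyToPS {R : Type} [Semiring R] : R[X] →+* PowerSeries R where
  toFun p := PowerSeries.mk fun n => p.coeff n
  map_zero' := by ext n; simp
  map_one' := by ext n; simp [PowerSeries.coeff_one, Polynomial.coeff_one]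
  map_add' p q := by ext n; simp
  map_mul' p q := by ext n; simp [PowerSeries.coeff_mul, Polynomial.coeff_mul]

lemma polyToPS_coeff {R : Type} [Semiring R] (p : R[X]) (n : ℕ) :
    PowerSeries.coeff n (polyToPS p) = p.coeff n := by
  simp [polyToPS]

lemma polyToPS_inj {R : Type} [Semiring R] : Function.Injective (polyToPS (R := R)) :=
  fun p q h => Polynomial.ext fun n => by
    have := congrArg (PowerSeries.coeff n) h
    simpa [polyToPS_coeff] using this

lemma polyToPS_C {R : Type} [Semiring R] (r : R) :
    polyToPS (C r) = PowerSeries.C r := by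
  apply PowerSeries.ext; intro n
  simp [polyToPS_coeff, Polynomial.coeff_C, PowerSeries.coeff_C]

lemma polyToPS_X {R : Type} [Semiring R] :
    polyToPS (X : R[X]) = PowerSeries.X := by
  apply PowerSeries.ext; intro n
  simp [polyToPS_coeff, Polynomial.coeff_X, PowerSeries.coeff_X, eq_comm]

lemma polyToPS_trunc {R : Type} [Semiring R] (P : PowerSeries R) (M : ℕ)
    (h : ∀ n, M ≤ n → PowerSeries.coeff n P = 0) :
    polyToPS (PowerSeries.trunc M P) = P := by
  apply PowerSeries.ext; intro n
  rw [polyToPS_coeff, PowerSeries.coeff_trunc]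
  split_ifs with hn
  · rfl
  · exact (h n (by omega)).symm

theorem ore_key (R : Type) [Ring R] [IsNoetherianRing R] (f : R[X])
    (hf : IsUnit (f.coeff 0)) (a : R[X]) :
    ∃ x y : R[X], IsUnit (y.coeff 0) ∧ x * f = y * a := by
  classical
  obtain ⟨u, hu⟩ := hf
  set Fp : PowerSeries R := polyToPS f with hFp
  have hcc : PowerSeries.constantCoeff Fp = u := by
    rw [← PowerSeries.coeff_zero_eq_constantCoeff_apply, hFp, polyToPS_coeff, hu]
  set g := PowerSeries.invOfUnit Fp u with hg
  have hFg : Fp * g = 1 := PowerSeries.mul_invOfUnit Fp u hcc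
  have hgF : g * Fp = 1 := PowerSeries.invOfUnit_mul Fp u hcc
  set s : PowerSeries R := polyToPS a * g with hs
  have hsF : s * Fp = polyToPS a := by rw [hs, mul_assoc, hgF, mul_one]
  set d := f.natDegree + 1 with hd
  set N := a.natDegree + d with hN
  set sc : ℕ → R := fun n => PowerSeries.coeff n s with hsc
  set c : ℕ → R := fun j => -(f.coeff (j + 1) * ((u⁻¹ : Rˣ) : R)) with hc
  -- the linear recurrence satisfied by the coefficients of `s`
  have hrec : ∀ n, N ≤ n → sc n = ∑ j ∈ Finset.range d, sc (n - (j + 1)) * c j := by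
    intro n hn
    have h0 : PowerSeries.coeff n (s * Fp) = 0 := by
      rw [hsF, polyToPS_coeff]
      exact coeff_eq_zero_of_natDegree_lt (by omega)
    rw [PowerSeries.coeff_mul, ← Finset.Nat.sum_antidiagonal_swap,
      Finset.Nat.sum_antidiagonal_eq_sum_range_succ_mk] at h0
    simp only [Prod.swap_prod_mk, Prod.fst, Prod.snd] at h0
    rw [Finset.sum_range_succ'] at h0
    have hsub : (∑ k ∈ Finset.range n,
        PowerSeries.coeff (n - (k + 1)) s * PowerSeries.coeff (k + 1) Fp)
        = ∑ k ∈ Finset.range d, sc (n - (k + 1)) * f.coeff (k + 1) := by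
      rw [← Finset.sum_subset (Finset.range_subset_range.mpr (by omega : d ≤ n))]
      · exact Finset.sum_congr rfl fun k _ => by rw [hFp, polyToPS_coeff]
      · intro k hk hkd
        rw [Finset.mem_range] at hk
        rw [Finset.mem_range, not_lt] at hkd
        have : f.coeff (k + 1) = 0 := coeff_eq_zero_of_natDegree_lt (by omega)
        simp [hFp, polyToPS_coeff, this]
    rw [hsub] at h0
    have h1 : sc n * (u : R) =
        -∑ k ∈ Finset.range d, sc (n - (k + 1)) * f.coeff (k + 1) := by
      have h2 : PowerSeries.coeff (n - 0) s * PowerSeries.coeff 0 Fp = sc n * (u : R) := by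
        rw [Nat.sub_zero, PowerSeries.coeff_zero_eq_constantCoeff_apply, hcc]
      rw [h2] at h0
      exact eq_neg_of_add_eq_zero_right h0
    have h3 : sc n = (-∑ k ∈ Finset.range d, sc (n - (k + 1)) * f.coeff (k + 1)) *
        ((u⁻¹ : Rˣ) : R) :=
      (Units.eq_mul_inv_iff_mul_eq u).mpr h1
    rw [h3, neg_mul, Finset.sum_mul, ← Finset.sum_neg_distrib]
    exact Finset.sum_congr rfl fun k _ => by rw [hc, mul_neg, mul_assoc]
  -- the shift operator
  set φ : (Fin d → R) →ₗ[R] (Fin d → R) :=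
    { toFun := fun v j => if h : (j : ℕ) + 1 < d then v ⟨(j : ℕ) + 1, h⟩
        else ∑ i : Fin d, v i * c (d - 1 - (i : ℕ))
      map_add' := by
        intro v w; funext j
        by_cases h : (j : ℕ) + 1 < d <;>
          simp [h, Finset.sum_add_distrib, add_mul]
      map_smul' := by
        intro r v; funext j
        by_cases h : (j : ℕ) + 1 < d <;>
          simp [h, Finset.mul_sum, mul_assoc] } with hφ
  set w : ℕ → Fin d → R := fun k i => sc (N + k + (i : ℕ)) with hw
  have hφw : ∀ k, φ (w k) = w (k + 1) := by
    intro k; funext j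
    rw [hφ]
    simp only [LinearMap.coe_mk, AddHom.coe_mk]
    by_cases h : (j : ℕ) + 1 < d
    · rw [dif_pos h, hw]
      show sc (N + k + ((j : ℕ) + 1)) = sc (N + (k + 1) + (j : ℕ))
      congr 1; omega
    · rw [dif_neg h]
      have hj : (j : ℕ) = d - 1 := by have := j.isLt; omega
      have hwj : w (k + 1) j = sc (N + k + d) := by rw [hw]; show sc _ = _; congr 1; omega
      rw [hwj, hrec (N + k + d) (by omega)]
      have hL : (∑ i : Fin d, w k i * c (d - 1 - (i : ℕ)))
          = ∑ i ∈ Finset.range d, sc (N + k + i) * c (d - 1 - i) :=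
        Fin.sum_univ_eq_sum_range (fun i => sc (N + k + i) * c (d - 1 - i)) d
      rw [hL, ← Finset.sum_range_reflect (fun k' => sc (N + k + d - (k' + 1)) * c k') d]
      refine Finset.sum_congr rfl fun i hi => ?_
      rw [Finset.mem_range] at hi
      rw [show N + k + d - (d - 1 - i + 1) = N + k + i by omega]
  -- noetherian chain of spans
  have hMmono : Monotone (fun k => Submodule.span R
      (Set.range fun i : Fin (k + 1) => w (i : ℕ))) := by
    apply monotone_nat_of_le_succ
    intro k
    apply Submodule.span_mono
    rintro _ ⟨i, rfl⟩
    exact ⟨i.castSucc, by simp⟩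
  obtain ⟨k, hk⟩ := monotone_stabilizes_iff_noetherian.mpr inferInstance
    ⟨fun k => Submodule.span R (Set.range fun i : Fin (k + 1) => w (i : ℕ)), hMmono⟩
  have hwmem : w (k + 1) ∈ Submodule.span R (Set.range fun i : Fin (k + 1) => w (i : ℕ)) := by
    have h1 : w (k + 1) ∈ Submodule.span R (Set.range fun i : Fin (k + 2) => w (i : ℕ)) :=
      Submodule.subset_span ⟨Fin.last (k + 1), rfl⟩
    have h2 : (Submodule.span R (Set.range fun i : Fin (k + 1) => w (i : ℕ)))
        = Submodule.span R (Set.range fun i : Fin (k + 1 + 1) => w (i : ℕ)) :=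
      hk (k + 1) (Nat.le_succ k)
    rw [h2]
    exact h1
  rw [Submodule.mem_span_range_iff_exists_fun] at hwmem
  obtain ⟨r, hr⟩ := hwmem
  -- propagate the linear relation
  have hprop : ∀ m, (∑ i : Fin (k + 1), r i • w ((i : ℕ) + m)) = w (k + 1 + m) := by
    intro m
    induction m with
    | zero => simpa using hr
    | succ m ih =>
      have step : ∀ i : Fin (k + 1), w ((i : ℕ) + (m + 1)) = φ (w ((i : ℕ) + m)) := by
        intro i
        rw [hφw]
        exact congrArg w (by omega)
      calc (∑ i : Fin (k + 1), r i • w ((i : ℕ) + (m + 1)))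
          = ∑ i : Fin (k + 1), r i • φ (w ((i : ℕ) + m)) := by
            exact Finset.sum_congr rfl fun i _ => by rw [step]
        _ = φ (∑ i : Fin (k + 1), r i • w ((i : ℕ) + m)) := by
            rw [map_sum]
            exact Finset.sum_congr rfl fun i _ => (map_smul φ _ _).symm
        _ = w (k + 1 + m + 1) := by rw [ih, hφw]
        _ = w (k + 1 + (m + 1)) := by ring_nf
  -- coordinate 0
  have hz : 0 < d := by omega
  have hcoord : ∀ m, (∑ i : Fin (k + 1), r i * sc (N + ((i : ℕ) + m))) = sc (N + (k + 1 + m)) := by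
    intro m
    have h1 := congrFun (hprop m) ⟨0, hz⟩
    rw [Finset.sum_apply] at h1
    simpa [hw] using h1
  -- the polynomial y
  set y : R[X] := 1 - ∑ i : Fin (k + 1), (C (r i) * X ^ (k + 1 - (i : ℕ))) with hy
  have hy0 : y.coeff 0 = 1 := by
    rw [hy, coeff_sub, coeff_one_zero, finset_sum_coeff]
    have : (∑ i : Fin (k + 1), (C (r i) * X ^ (k + 1 - (i : ℕ))).coeff 0) = 0 := by
      apply Finset.sum_eq_zero
      intro i _
      have hne : (0 : ℕ) ≠ k + 1 - (i : ℕ) := by have := i.isLt; omega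
      rw [coeff_C_mul, coeff_X_pow, if_neg hne, mul_zero]
    rw [this, sub_zero]
  -- y * s is a polynomial
  set P : PowerSeries R := polyToPS y * s with hP
  have hPcoeff : ∀ n, N + k + 1 ≤ n → PowerSeries.coeff n P = 0 := by
    intro n hn
    set m := n - (N + k + 1) with hm
    have hcoe : polyToPS y =
        1 - ∑ i : Fin (k + 1), PowerSeries.C (r i) * PowerSeries.X ^ (k + 1 - (i : ℕ)) := by
      rw [hy, map_sub, map_one, map_sum]
      congr 1
      exact Finset.sum_congr rfl fun i _ => by rw [map_mul, map_pow, polyToPS_C, polyToPS_X]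
    rw [hP, hcoe, sub_mul, one_mul, Finset.sum_mul, map_sub, map_sum]
    have hterm : ∀ i : Fin (k + 1),
        PowerSeries.coeff n (PowerSeries.C (r i) * PowerSeries.X ^ (k + 1 - (i : ℕ)) * s)
        = r i * sc (N + ((i : ℕ) + m)) := by
      intro i
      rw [mul_assoc, PowerSeries.coeff_C_mul, PowerSeries.coeff_X_pow_mul',
        if_pos (by omega : k + 1 - (i : ℕ) ≤ n)]
      have he : n - (k + 1 - (i : ℕ)) = N + ((i : ℕ) + m) := by have := i.isLt; omega
      rw [he]
    rw [Finset.sum_congr rfl fun i _ => hterm i, hcoord m]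
    have hn' : n = N + (k + 1 + m) := by omega
    rw [← hn']
    exact sub_self _
  set x : R[X] := PowerSeries.trunc (N + k + 1) P with hx
  have hxP : polyToPS x = P := polyToPS_trunc P (N + k + 1) hPcoeff
  refine ⟨x, y, by rw [hy0]; exact isUnit_one, ?_⟩
  apply polyToPS_inj
  rw [map_mul, map_mul, hxP, hP, mul_assoc, hsF]


variable {R : Type} [Ring R]

/-- The left `R`-submodule of coefficients at degree `n` of elements of `I` of degree ≤ n. -/
def Lset (I : Submodule R[X] R[X]) (n : ℕ) : Submodule R R where
  carrier := {r | ∃ p, p ∈ I ∧ p.natDegree ≤ n ∧ p.coeff n = r}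
  add_mem' := by
    rintro a b ⟨p, hp, hdp, rfl⟩ ⟨q, hq, hdq, rfl⟩
    exact ⟨p + q, I.add_mem hp hq,
      (natDegree_add_le p q).trans (max_le hdp hdq), coeff_add p q n⟩
  zero_mem' := ⟨0, I.zero_mem, by simp, by simp⟩
  smul_mem' := by
    rintro c x ⟨p, hp, hd, rfl⟩
    refine ⟨C c * p, by simpa [smul_eq_mul] using I.smul_mem (C c) hp,
      (natDegree_C_mul_le c p).trans hd, ?_⟩
    simp [coeff_C_mul, smul_eq_mul]

lemma Lset_mono (I : Submodule R[X] R[X]) : Monotone (Lset I) := by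
  apply monotone_nat_of_le_succ
  rintro n r ⟨p, hp, hd, rfl⟩
  refine ⟨X * p, by simpa [smul_eq_mul] using I.smul_mem X hp, ?_, coeff_X_mul p n⟩
  exact natDegree_mul_le.trans ((add_le_add natDegree_X_le hd).trans (by omega))

/-- Noncommutative Hilbert basis theorem (left noetherian). -/
theorem myHBT (R : Type) [Ring R] [IsNoetherianRing R] : IsNoetherianRing R[X] := by
  classical
  rw [isNoetherianRing_iff, isNoetherian_def]
  intro I
  obtain ⟨N, hN⟩ := monotone_stabilizes_iff_noetherian.mpr ‹IsNoetherianRing R›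
    ⟨Lset I, Lset_mono I⟩
  have hG : ∀ n, ∃ G : Finset R, Submodule.span R (G : Set R) = Lset I n := fun n =>
    IsNoetherian.noetherian _
  choose G hGspan using hG
  have hP : ∀ n r, ∃ p, r ∈ G n → p ∈ I ∧ p.natDegree ≤ n ∧ p.coeff n = r := by
    intro n r
    by_cases h : r ∈ G n
    · have hr : r ∈ Lset I n := hGspan n ▸ Submodule.subset_span h
      obtain ⟨p, hp⟩ := hr
      exact ⟨p, fun _ => hp⟩
    · exact ⟨0, fun h' => absurd h' h⟩
  choose P hPspec using hP
  set B : Finset R[X] :=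
    (Finset.range (N + 1)).biUnion (fun n => (G n).image fun r => P n r) with hB
  set F : Submodule R[X] R[X] := Submodule.span R[X] (B : Set R[X]) with hF
  have hBI : (B : Set R[X]) ⊆ I := by
    intro p hp
    simp only [hB, Finset.coe_biUnion, Finset.mem_coe, Finset.mem_biUnion, Finset.mem_image,
      Set.mem_iUnion] at hp
    obtain ⟨n, _, r, hr, rfl⟩ := hp
    exact (hPspec n r hr).1
  have hFI : F ≤ I := Submodule.span_le.mpr hBI
  have key : ∀ n, n ≤ N → ∀ m, n ≤ m → ∀ r ∈ Lset I n,
      ∃ q, q ∈ F ∧ q.natDegree ≤ m ∧ q.coeff m = r := by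
    intro n hnN m hnm r hr
    rw [← hGspan n] at hr
    induction hr using Submodule.span_induction with
    | mem r hrG =>
      have hmemB : P n r ∈ B := by
        rw [hB]
        exact Finset.mem_biUnion.mpr ⟨n, Finset.mem_range.mpr (Nat.lt_succ_of_le hnN),
          Finset.mem_image.mpr ⟨r, hrG, rfl⟩⟩
      have hmem : P n r ∈ F := Submodule.subset_span (Finset.mem_coe.mpr hmemB)
      refine ⟨X ^ (m - n) * P n r,
        by simpa [smul_eq_mul] using F.smul_mem (X ^ (m - n)) hmem, ?_, ?_⟩
      · exact natDegree_mul_le.trans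
          ((add_le_add (natDegree_X_pow_le _) (hPspec n r hrG).2.1).trans (by omega))
      · rw [coeff_X_pow_mul', if_pos (by omega : m - n ≤ m)]
        have hmn : m - (m - n) = n := by omega
        rw [hmn]
        exact (hPspec n r hrG).2.2
    | zero => exact ⟨0, F.zero_mem, by simp, by simp⟩
    | add x y _ _ hx hy =>
      obtain ⟨qx, hqxF, hqxd, hqxc⟩ := hx
      obtain ⟨qy, hqyF, hqyd, hqyc⟩ := hy
      exact ⟨qx + qy, F.add_mem hqxF hqyF,
        (natDegree_add_le qx qy).trans (max_le hqxd hqyd), by simp [hqxc, hqyc]⟩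
    | smul c x _ hx =>
      obtain ⟨q, hqF, hqd, hqc⟩ := hx
      exact ⟨C c * q, by simpa [smul_eq_mul] using F.smul_mem (C c) hqF,
        (natDegree_C_mul_le c q).trans hqd, by simp [coeff_C_mul, hqc, smul_eq_mul]⟩
  have main : ∀ d p, p ∈ I → p.natDegree ≤ d → p ∈ F := by
    intro d
    induction d using Nat.strong_induction_on with
    | _ d IH =>
      intro p hpI hpd
      have hr : p.coeff d ∈ Lset I (min d N) := by
        rcases le_or_gt d N with h | h
        · rw [min_eq_left h]; exact ⟨p, hpI, hpd, rfl⟩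
        · rw [min_eq_right h.le]
          have h2 : Lset I N = Lset I d := hN d h.le
          rw [h2]
          exact ⟨p, hpI, hpd, rfl⟩
      obtain ⟨q, hqF, hqd, hqc⟩ :=
        key (min d N) (min_le_right d N) d (min_le_left d N) _ hr
      have hpq : p - q ∈ I := I.sub_mem hpI (hFI hqF)
      have hc : (p - q).coeff d = 0 := by simp [hqc]
      cases d with
      | zero =>
        have h0 : p - q = 0 := by
          have := eq_C_of_natDegree_le_zero
            ((natDegree_sub_le p q).trans (by omega))
          rw [this, hc, map_zero]
        have : p = q := by rwa [sub_eq_zero] at h0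
        exact this ▸ hqF
      | succ e =>
        have hd' : (p - q).natDegree ≤ e := by
          rw [natDegree_le_iff_coeff_eq_zero]
          intro m hm
          rcases eq_or_lt_of_le (Nat.succ_le_of_lt hm) with h | h
          · exact h ▸ hc
          · exact coeff_eq_zero_of_natDegree_lt
              (lt_of_le_of_lt ((natDegree_sub_le p q).trans (by omega)) h)
        have := IH e (Nat.lt_succ_self e) (p - q) hpq hd'
        simpa [sub_add_cancel] using F.add_mem this hqF
  have hIF : I = F := le_antisymm (fun p hp => main p.natDegree p hp le_rfl) hFI
  exact hIF ▸ ⟨B, rfl⟩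

/-- For a noetherian (possibly non-commutative) ring `R`, the set
`S_t = { f ∈ R[t] : f(0) ∈ R^× }` consists of left and right non-zero-divisors and satisfies
the left Ore condition, so a left localisation `R[t]_{S_t}` exists and is noetherian. -/
theorem St_is_left_denominator_set (R : Type) [Ring R] [IsNoetherianRing R] :
    (∀ f : R[X], IsUnit (f.coeff 0) →
        (∀ a : R[X], a * f = 0 → a = 0) ∧ (∀ a : R[X], f * a = 0 → a = 0)) ∧
    (∀ f : R[X], IsUnit (f.coeff 0) → ∀ a : R[X],
        ∃ x : R[X], ∃ y : R[X], IsUnit (y.coeff 0) ∧ x * f = y * a) ∧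
    (∃ (T : Type) (_ : Ring T) (ψ : R[X] →+* T),
        IsNoetherianRing T ∧ Function.Injective ψ ∧
        (∀ f : R[X], IsUnit (f.coeff 0) → IsUnit (ψ f)) ∧
        (∀ q : T, ∃ (a f : R[X]), IsUnit (f.coeff 0) ∧ ψ f * q = ψ a)) := by
  classical
  have reg : ∀ f : R[X], IsUnit (f.coeff 0) →
      (∀ a : R[X], a * f = 0 → a = 0) ∧ (∀ a : R[X], f * a = 0 → a = 0) := by
    intro f hf
    obtain ⟨u, hu⟩ := hf
    have hcc : PowerSeries.constantCoeff (polyToPS f) = u := by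
      rw [← PowerSeries.coeff_zero_eq_constantCoeff_apply, polyToPS_coeff, hu]
    have hFg := PowerSeries.mul_invOfUnit (polyToPS f) u hcc
    have hgF := PowerSeries.invOfUnit_mul (polyToPS f) u hcc
    constructor
    · intro a ha
      apply polyToPS_inj
      rw [map_zero]
      have h0 : polyToPS a * polyToPS f = 0 := by rw [← map_mul, ha, map_zero]
      calc polyToPS a
          = polyToPS a * (polyToPS f * PowerSeries.invOfUnit (polyToPS f) u) := by
            rw [hFg, mul_one]
        _ = polyToPS a * polyToPS f * PowerSeries.invOfUnit (polyToPS f) u := by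
            rw [mul_assoc]
        _ = 0 := by rw [h0, zero_mul]
    · intro a ha
      apply polyToPS_inj
      rw [map_zero]
      have h0 : polyToPS f * polyToPS a = 0 := by rw [← map_mul, ha, map_zero]
      calc polyToPS a
          = PowerSeries.invOfUnit (polyToPS f) u * polyToPS f * polyToPS a := by
            rw [hgF, one_mul]
        _ = PowerSeries.invOfUnit (polyToPS f) u * (polyToPS f * polyToPS a) := by
            rw [mul_assoc]
        _ = 0 := by rw [h0, mul_zero]
  refine ⟨reg, fun f hf a => ore_key R f hf a, ?_⟩
  set S : Submonoid R[X] :=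
    { carrier := {f | IsUnit (f.coeff 0)}
      one_mem' := by
        show IsUnit ((1 : R[X]).coeff 0)
        rw [coeff_one_zero]
        exact isUnit_one
      mul_mem' := by
        intro p q hp hq
        show IsUnit ((p * q).coeff 0)
        rw [mul_coeff_zero]
        exact IsUnit.mul hp hq } with hSdef
  have hmemS : ∀ f : R[X], f ∈ S ↔ IsUnit (f.coeff 0) := fun f => Iff.rfl
  have hcancel : ∀ (r₁ r₂ : R[X]) (s : S), r₁ * s = r₂ * s →
      ∃ s' : S, (s' : R[X]) * r₁ = (s' : R[X]) * r₂ := by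
    intro r₁ r₂ s h
    refine ⟨1, ?_⟩
    have h0 : (r₁ - r₂) * (s : R[X]) = 0 := by rw [sub_mul, h, sub_self]
    have h1 := (reg s s.2).1 _ h0
    rw [sub_eq_zero] at h1
    rw [h1]
  have hore : ∀ (r : R[X]) (s : S), ∃ (r' : R[X]) (s' : S),
      (s' : R[X]) * r = r' * (s : R[X]) := by
    intro r s
    obtain ⟨x, y, hy, hxy⟩ := ore_key R s s.2 r
    exact ⟨x, ⟨y, hy⟩, hxy.symm⟩
  letI oreS : OreLocalization.OreSet S :=
    (OreLocalization.nonempty_oreSet_iff.mpr ⟨hcancel, hore⟩).some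
  have hunit : ∀ f : R[X], IsUnit (f.coeff 0) →
      IsUnit ((OreLocalization.numeratorRingHom : R[X] →+* OreLocalization S R[X]) f) := by
    intro f hf
    exact OreLocalization.numerator_isUnit (⟨f, hf⟩ : S)
  have hsurj : ∀ q : OreLocalization S R[X], ∃ a fp : R[X], IsUnit (fp.coeff 0) ∧
      (OreLocalization.numeratorRingHom : R[X] →+* OreLocalization S R[X]) fp * q =
      (OreLocalization.numeratorRingHom : R[X] →+* OreLocalization S R[X]) a := by
    intro q
    induction q using OreLocalization.ind with
    | _ r s =>
      refine ⟨r, s, s.2, ?_⟩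
      show OreLocalization.numeratorHom (s : R[X]) * _ = OreLocalization.numeratorHom r
      rw [OreLocalization.numeratorHom_apply, OreLocalization.numeratorHom_apply,
        OreLocalization.mul_cancel]
  have hinj : Function.Injective
      (OreLocalization.numeratorRingHom : R[X] →+* OreLocalization S R[X]) := by
    have hS' : S ≤ nonZeroDivisorsLeft R[X] := by
      intro sf hs
      rw [mem_nonZeroDivisorsLeft_iff]
      intro y hy
      exact (reg _ hs).2 y hy
    exact fun p q h => OreLocalization.numeratorHom_inj hS' h
  have hRX : IsNoetherianRing R[X] := myHBT R
  have hnoeth : IsNoetherianRing (OreLocalization S R[X]) := by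
    rw [isNoetherianRing_iff, isNoetherian_iff]
    set ψ : R[X] →+* OreLocalization S R[X] := OreLocalization.numeratorRingHom with hψ
    let cmap : Submodule (OreLocalization S R[X]) (OreLocalization S R[X]) →
        Submodule R[X] R[X] := fun J =>
      { carrier := ψ ⁻¹' J
        add_mem' := by
          intro x y hx hy
          simp only [Set.mem_preimage, map_add] at *
          exact J.add_mem hx hy
        zero_mem' := by
          simp only [Set.mem_preimage, map_zero]
          exact J.zero_mem
        smul_mem' := by
          intro c x hx
          simp only [Set.mem_preimage, smul_eq_mul, map_mul] at *
          simpa [smul_eq_mul] using J.smul_mem (ψ c) hx }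
    have hmono : ∀ J J', J ≤ J' → cmap J ≤ cmap J' := fun J J' h x hx => h hx
    have hreflect : ∀ J J', cmap J ≤ cmap J' → J ≤ J' := by
      intro J J' h q hq
      obtain ⟨aq, fq, hfq, heq⟩ := hsurj q
      have h1 : ψ aq ∈ J := by
        rw [← heq]
        simpa [smul_eq_mul] using J.smul_mem (ψ fq) hq
      have h2 : ψ aq ∈ J' := h h1
      obtain ⟨v, hv⟩ := hunit fq hfq
      have h3 : q = (↑v⁻¹ : OreLocalization S R[X]) * ψ aq := by
        rw [← heq, ← hv, ← mul_assoc, Units.inv_mul, one_mul]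
      rw [h3]
      simpa [smul_eq_mul] using J'.smul_mem (↑v⁻¹) h2
    have hiff : ∀ J J', cmap J ≤ cmap J' ↔ J ≤ J' := fun J J' =>
      ⟨hreflect J J', hmono J J'⟩
    let emb : ((· > ·) : Submodule (OreLocalization S R[X]) (OreLocalization S R[X]) →
          Submodule (OreLocalization S R[X]) (OreLocalization S R[X]) → Prop) ↪r
        ((· > ·) : Submodule R[X] R[X] → Submodule R[X] R[X] → Prop) :=
      { toFun := cmap
        inj' := fun J J' h =>
          le_antisymm (hreflect J J' (le_of_eq h)) (hreflect J' J (le_of_eq h.symm))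
        map_rel_iff' := by
          intro J J'
          show cmap J' < cmap J ↔ J' < J
          simp only [lt_iff_le_not_ge, hiff] }
    exact emb.wellFounded (isNoetherian_iff.mp (isNoetherianRing_iff.mp hRX))
  exact ⟨OreLocalization S R[X], inferInstance, OreLocalization.numeratorRingHom,
    hnoeth, hinj, hunit, hsurj⟩
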